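/- Let n ≥ 1, let 1 ≤ k ≤ n − 1, and let Φ : B_H → B_H be an ℝ-linear map that maps the set P_k of rank-k Hermitian projections surjectively onto itself. Then Φ is trace-preserving: tr Φ(X) = tr X for every X ∈ B_H. -/

import Mathlib

open Matrix

noncomputable section

/-- `BH n` is the real vector space of `n × n` complex Hermitian (self-adjoint) matrices. -/
abbrev BH (n : ℕ) := selfAdjoint (Matrix (Fin n) (Fin n) ℂ)

/-- `projSet n k` is the set of rank-`k` Hermitian projections, viewed inside `BH n`. -/
def projSet (n k : ℕ) : Set (BH n) :=
  {P | (P : Matrix (Fin n) (Fin n) ℂ) * (P : Matrix (Fin n) (Fin n) ℂ) = (P : Matrix (Fin n) (Fin n) ℂ)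
    ∧ (P : Matrix (Fin n) (Fin n) ℂ).rank = k}

namespace Stmt10Aux

variable {n : ℕ}

/-- The diagonal 0/1 matrix with ones exactly on `T`. -/
def indic (n : ℕ) (T : Finset (Fin n)) : Matrix (Fin n) (Fin n) ℂ :=
  diagonal (fun i => if i ∈ T then 1 else 0)

lemma indic_mul_indic (T : Finset (Fin n)) : indic n T * indic n T = indic n T := by
  rw [indic, diagonal_mul_diagonal]
  refine congrArg diagonal ?_
  funext i
  by_cases h : i ∈ T <;> simp [h]

lemma indic_star (T : Finset (Fin n)) : star (indic n T) = indic n T := by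
  rw [indic, star_eq_conjTranspose, diagonal_conjTranspose]
  refine congrArg diagonal ?_
  funext i
  by_cases h : i ∈ T <;> simp [h, Pi.star_apply]

lemma indic_rank (T : Finset (Fin n)) : (indic n T).rank = T.card := by
  rw [indic, rank_diagonal, Fintype.card_subtype]
  congr 1
  ext i
  by_cases h : i ∈ T <;> simp [h]

/-- The Hermitian projection `U D_T U*`, as an element of `BH n`. -/
def qq (U : unitaryGroup (Fin n) ℂ) (T : Finset (Fin n)) : BH n :=
  ⟨(U : Matrix (Fin n) (Fin n) ℂ) * indic n T * star (U : Matrix (Fin n) (Fin n) ℂ), by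
    show star _ = _
    simp only [StarMul.star_mul, star_star, indic_star, mul_assoc]⟩

lemma qq_coe (U : unitaryGroup (Fin n) ℂ) (T : Finset (Fin n)) :
    (qq U T : Matrix (Fin n) (Fin n) ℂ)
      = (U : Matrix (Fin n) (Fin n) ℂ) * indic n T * star (U : Matrix (Fin n) (Fin n) ℂ) := rfl

lemma qq_mem (U : unitaryGroup (Fin n) ℂ) (T : Finset (Fin n)) :
    qq U T ∈ projSet n T.card := by
  constructor
  · rw [qq_coe]
    have h1 : star (U : Matrix (Fin n) (Fin n) ℂ) * (U : Matrix (Fin n) (Fin n) ℂ) = 1 :=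
      UnitaryGroup.star_mul_self U
    calc (U : Matrix (Fin n) (Fin n) ℂ) * indic n T * star (U : Matrix (Fin n) (Fin n) ℂ)
          * ((U : Matrix (Fin n) (Fin n) ℂ) * indic n T * star (U : Matrix (Fin n) (Fin n) ℂ))
        = (U : Matrix (Fin n) (Fin n) ℂ) * indic n T
            * (star (U : Matrix (Fin n) (Fin n) ℂ) * (U : Matrix (Fin n) (Fin n) ℂ))
            * indic n T * star (U : Matrix (Fin n) (Fin n) ℂ) := by
          simp only [mul_assoc]
      _ = (U : Matrix (Fin n) (Fin n) ℂ) * (indic n T * indic n T)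
            * star (U : Matrix (Fin n) (Fin n) ℂ) := by
          rw [h1, mul_one]
          simp only [mul_assoc]
      _ = _ := by rw [indic_mul_indic]
  · rw [qq_coe]
    have hdetU : IsUnit (U : Matrix (Fin n) (Fin n) ℂ).det := UnitaryGroup.det_isUnit U
    have hdetUs : IsUnit (star (U : Matrix (Fin n) (Fin n) ℂ)).det := by
      have := UnitaryGroup.det_isUnit U⁻¹
      rwa [UnitaryGroup.inv_val] at this
    rw [rank_mul_eq_left_of_isUnit_det _ _ hdetUs, rank_mul_eq_right_of_isUnit_det _ _ hdetU,
      indic_rank]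

lemma indic_insert_erase (A : Finset (Fin n)) (m j : Fin n) (hm : m ∉ A) (hj : j ∈ A) :
    indic n (insert m (A.erase j)) = indic n {m} + indic n A - indic n {j} := by
  unfold indic
  ext i i'
  by_cases h : i = i'
  · subst h
    simp only [diagonal_apply_eq, Matrix.sub_apply, Matrix.add_apply, diagonal_apply_eq,
      Finset.mem_insert, Finset.mem_erase, Finset.mem_singleton]
    by_cases him : i = m
    · subst him
      have : i ∉ A := hm
      have hij : i ≠ j := fun h' => this (h' ▸ hj)
      simp [this, hij]
    · by_cases hij : i = j
      · subst hij
        simp [him, hj]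
      · by_cases hiA : i ∈ A <;> simp [him, hij, hiA]
  · simp [diagonal_apply_ne _ h]

lemma sum_indic_singleton (A : Finset (Fin n)) :
    ∑ j ∈ A, indic n {j} = indic n A := by
  unfold indic
  ext i i'
  by_cases h : i = i'
  · subst h
    simp only [Matrix.sum_apply, diagonal_apply_eq, Finset.mem_singleton]
    rw [Finset.sum_ite_eq A i (fun _ => (1 : ℂ))]
  · simp [diagonal_apply_ne _ h, Matrix.sum_apply]

lemma key_identity (U : unitaryGroup (Fin n) ℂ) (A : Finset (Fin n)) (m : Fin n) (hm : m ∉ A) :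
    (A.card : ℝ) • qq U {m} + ((A.card : ℝ) - 1) • qq U A
      = ∑ j ∈ A, qq U (insert m (A.erase j)) := by
  apply Subtype.ext
  push_cast [AddSubmonoidClass.coe_finset_sum, selfAdjoint.val_smul, AddSubgroup.coe_add, qq_coe]
  have : ∀ j ∈ A, (U : Matrix (Fin n) (Fin n) ℂ) * indic n (insert m (A.erase j))
      * star (U : Matrix (Fin n) (Fin n) ℂ)
      = (U : Matrix (Fin n) (Fin n) ℂ) * (indic n {m} + indic n A - indic n {j})
        * star (U : Matrix (Fin n) (Fin n) ℂ) := by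
    intro j hj
    rw [indic_insert_erase A m j hm hj]
  rw [Finset.sum_congr rfl this]
  have hsum : ∑ j ∈ A, (U : Matrix (Fin n) (Fin n) ℂ) * (indic n {m} + indic n A - indic n {j})
        * star (U : Matrix (Fin n) (Fin n) ℂ)
      = (U : Matrix (Fin n) (Fin n) ℂ)
        * (∑ j ∈ A, (indic n {m} + indic n A - indic n {j}))
        * star (U : Matrix (Fin n) (Fin n) ℂ) := by
    rw [Finset.mul_sum, Finset.sum_mul]
  rw [hsum]
  have hinner : (∑ j ∈ A, (indic n {m} + indic n A - indic n {j}))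
      = (A.card : ℝ) • indic n {m} + ((A.card : ℝ) - 1) • indic n A := by
    rw [Finset.sum_sub_distrib, sum_indic_singleton, Finset.sum_add_distrib,
      Finset.sum_const, Finset.sum_const, sub_smul, one_smul,
      Nat.cast_smul_eq_nsmul ℝ, Nat.cast_smul_eq_nsmul ℝ]
    abel
  rw [hinner]
  simp only [smul_mul_assoc, mul_smul_comm, Matrix.add_mul, Matrix.mul_add]

/-- The trace of a Hermitian idempotent matrix is its rank. -/
lemma trace_eq_rank {A : Matrix (Fin n) (Fin n) ℂ} (hA : A.IsHermitian) (h2 : A * A = A) :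
    A.trace = (A.rank : ℂ) := by
  classical
  set U : Matrix (Fin n) (Fin n) ℂ := (hA.eigenvectorUnitary : Matrix (Fin n) (Fin n) ℂ) with hU
  have hsU : star U * U = 1 := UnitaryGroup.star_mul_self hA.eigenvectorUnitary
  have hUs : U * star U = 1 := hA.eigenvectorUnitary.2.2
  have hdiag : star U * A * U = diagonal (RCLike.ofReal ∘ hA.eigenvalues) := by
    conv_lhs => rw [hA.spectral_theorem, Unitary.conjStarAlgAut_apply]
    show star U * (U * _ * star U) * U = _
    simp only [← mul_assoc, hsU, one_mul]
    rw [mul_assoc, hsU, mul_one]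
  -- eigenvalues are 0 or 1
  have hD2 : (diagonal (RCLike.ofReal ∘ hA.eigenvalues) : Matrix (Fin n) (Fin n) ℂ)
        * diagonal (RCLike.ofReal ∘ hA.eigenvalues)
      = diagonal (RCLike.ofReal ∘ hA.eigenvalues) := by
    rw [← hdiag]
    calc star U * A * U * (star U * A * U)
        = star U * A * (U * star U) * A * U := by simp only [mul_assoc]
      _ = star U * (A * A) * U := by rw [hUs]; simp only [mul_assoc, one_mul]
      _ = star U * A * U := by rw [h2, mul_assoc]
  have h01 : ∀ i, hA.eigenvalues i = 0 ∨ hA.eigenvalues i = 1 := by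
    intro i
    have := congrArg (fun M => M i i) hD2
    simp only [diagonal_mul_diagonal, diagonal_apply_eq, Pi.mul_apply, Function.comp_apply] at this
    have h : (hA.eigenvalues i : ℂ) = 0 ∨ (hA.eigenvalues i : ℂ) = 1 :=
      eq_zero_or_one_of_sq_eq_self (by rw [sq]; exact this)
    rcases h with h | h
    · left; exact_mod_cast h
    · right; exact_mod_cast h
  have htr : A.trace = ∑ i, (hA.eigenvalues i : ℂ) := by
    conv_lhs => rw [hA.spectral_theorem]
    rw [Unitary.conjStarAlgAut_apply, trace_mul_comm, ← mul_assoc, hsU, one_mul, trace_diagonal]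
    rfl
  rw [htr, hA.rank_eq_card_non_zero_eigs, Fintype.card_subtype]
  have hterm : ∀ i ∈ Finset.univ, (hA.eigenvalues i : ℂ)
      = if hA.eigenvalues i ≠ 0 then 1 else 0 := by
    intro i _
    rcases h01 i with h | h <;> simp [h]
  rw [Finset.sum_congr rfl hterm, Finset.sum_ite, Finset.sum_const, Finset.sum_const]
  simp

end Stmt10Aux

open Stmt10Aux

theorem stmt_10 (n k : ℕ) (hn : 1 ≤ n) (hk1 : 1 ≤ k) (hkn : k ≤ n - 1)
    (Φ : BH n →ₗ[ℝ] BH n)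
    (hΦ : (⇑Φ) '' projSet n k = projSet n k) :
    ∀ X : BH n, (Φ X : Matrix (Fin n) (Fin n) ℂ).trace = (X : Matrix (Fin n) (Fin n) ℂ).trace := by
  classical
  -- The trace defect functional
  let t : BH n →ₗ[ℝ] ℂ :=
    { toFun := fun Y => (Φ Y : Matrix (Fin n) (Fin n) ℂ).trace - (Y : Matrix (Fin n) (Fin n) ℂ).trace
      map_add' := by
        intro Y Z
        simp only [map_add, AddSubgroup.coe_add, trace_add]
        ring
      map_smul' := by
        intro r Y
        simp only [LinearMap.map_smul, selfAdjoint.val_smul, trace_smul, RingHom.id_apply,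
          smul_sub] }
  have hP0 : ∀ P ∈ projSet n k, t P = 0 := by
    intro P hP
    have hΦP : Φ P ∈ projSet n k := hΦ ▸ Set.mem_image_of_mem _ hP
    have e1 : (Φ P : Matrix (Fin n) (Fin n) ℂ).trace = (k : ℂ) := by
      rw [trace_eq_rank (Φ P).prop hΦP.1, hΦP.2]
    have e2 : (P : Matrix (Fin n) (Fin n) ℂ).trace = (k : ℂ) := by
      rw [trace_eq_rank P.prop hP.1, hP.2]
    show (Φ P : Matrix (Fin n) (Fin n) ℂ).trace - (P : Matrix (Fin n) (Fin n) ℂ).trace = 0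
    rw [e1, e2, sub_self]
  have hq0 : ∀ (U : unitaryGroup (Fin n) ℂ) (T : Finset (Fin n)), T.card = k → t (qq U T) = 0 := by
    intro U T hT
    exact hP0 _ (hT ▸ qq_mem U T)
  have hm0 : ∀ (U : unitaryGroup (Fin n) ℂ) (m : Fin n), t (qq U {m}) = 0 := by
    intro U m
    have hcard : k ≤ (Finset.univ.erase m).card := by
      rw [Finset.card_erase_of_mem (Finset.mem_univ m), Finset.card_univ, Fintype.card_fin]
      exact hkn
    obtain ⟨A, hAsub, hAcard⟩ := Finset.exists_subset_card_eq hcard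
    have hmA : m ∉ A := fun h => (Finset.mem_erase.mp (hAsub h)).1 rfl
    have hid := key_identity U A m hmA
    have := congrArg t hid
    rw [map_add, LinearMap.map_smul, LinearMap.map_smul, map_sum] at this
    have hzero : ∀ j ∈ A, t (qq U (insert m (A.erase j))) = 0 := by
      intro j hj
      apply hq0
      rw [Finset.card_insert_of_notMem (fun h => hmA (Finset.erase_subset _ _ h)),
        Finset.card_erase_of_mem hj, hAcard]
      omega
    rw [Finset.sum_eq_zero hzero, hq0 U A hAcard, smul_zero, add_zero, hAcard] at this
    have hk0 : (k : ℝ) ≠ 0 := Nat.cast_ne_zero.mpr (by omega)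
    exact (smul_eq_zero.mp this).resolve_left hk0
  intro X
  have hX : (X : Matrix (Fin n) (Fin n) ℂ).IsHermitian := X.prop
  -- spectral decomposition of X inside BH n
  have hdecomp : X = ∑ m, hX.eigenvalues m • qq hX.eigenvectorUnitary {m} := by
    apply Subtype.ext
    rw [AddSubmonoidClass.coe_finset_sum]
    simp only [selfAdjoint.val_smul, qq_coe]
    have h1 : ∑ m, hX.eigenvalues m •
        ((hX.eigenvectorUnitary : Matrix (Fin n) (Fin n) ℂ) * indic n {m}
          * star (hX.eigenvectorUnitary : Matrix (Fin n) (Fin n) ℂ))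
        = (hX.eigenvectorUnitary : Matrix (Fin n) (Fin n) ℂ)
          * (∑ m, hX.eigenvalues m • indic n {m})
          * star (hX.eigenvectorUnitary : Matrix (Fin n) (Fin n) ℂ) := by
      rw [Finset.mul_sum, Finset.sum_mul]
      exact Finset.sum_congr rfl fun m _ => by rw [mul_smul_comm, smul_mul_assoc]
    rw [h1]
    have h2 : (∑ m, hX.eigenvalues m • indic n {m})
        = diagonal (RCLike.ofReal ∘ hX.eigenvalues) := by
      unfold indic
      ext i i'
      by_cases h : i = i'
      · subst h
        simp only [Matrix.sum_apply, Matrix.smul_apply, diagonal_apply_eq, Finset.mem_singleton,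
          Function.comp_apply]
        have : ∀ m, hX.eigenvalues m • (if i = m then (1 : ℂ) else 0)
            = if i = m then (hX.eigenvalues m : ℂ) else 0 := by
          intro m
          by_cases hm : i = m <;> simp [hm]
        rw [Finset.sum_congr rfl (fun m _ => this m),
          Finset.sum_ite_eq Finset.univ i (fun m => (hX.eigenvalues m : ℂ))]
        simp
      · simp [diagonal_apply_ne _ h, Matrix.sum_apply]
    rw [h2]
    exact hX.spectral_theorem
  have htX : t X = 0 := by
    rw [hdecomp, map_sum]
    apply Finset.sum_eq_zero
    intro m _
    rw [LinearMap.map_smul, hm0, smul_zero]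
  exact sub_eq_zero.mp htX
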